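/- The projection map (x,y,z) ↦ (x,y) maps the blown-up curve S̃_ε = {(x,y,z) : (z/ε)² + (x-½)² = ¼ and εy = zx} bijectively onto the cuspidal curve S = {(x,y) : y² = x³ - x⁴}, with inverse given by (x,y) ↦ (x, y, εy/x) for x ≠ 0 and (0,0) ↦ (0,0,0). -/

import Mathlib

/-- For ε > 0, the projection (x,y,z) ↦ (x,y) maps the blown-up curve
S̃_ε = {(x,y,z) : (z/ε)² + (x-½)² = ¼ ∧ εy = zx} bijectively onto the cuspidal
curve S = {(x,y) : y² = x³ - x⁴}, with inverse g given by
g(x,y) = (x, y, εy/x) for x ≠ 0 and g(0,0) = (0,0,0). -/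
theorem stmt_7 (ε : ℝ) (hε : 0 < ε)
    (Stilde : Set (ℝ × ℝ × ℝ)) (S : Set (ℝ × ℝ))
    (hStilde : Stilde = {p : ℝ × ℝ × ℝ |
        (p.2.2 / ε) ^ 2 + (p.1 - 1 / 2) ^ 2 = 1 / 4 ∧ ε * p.2.1 = p.2.2 * p.1})
    (hS : S = {q : ℝ × ℝ | q.2 ^ 2 = q.1 ^ 3 - q.1 ^ 4})
    (g : ℝ × ℝ → ℝ × ℝ × ℝ)
    (hg : ∀ x y : ℝ, g (x, y) = if x = 0 then ((0 : ℝ), (0 : ℝ), (0 : ℝ))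
        else (x, y, ε * y / x)) :
    Set.BijOn (fun p : ℝ × ℝ × ℝ => (p.1, p.2.1)) Stilde S ∧
    Set.InvOn g (fun p : ℝ × ℝ × ℝ => (p.1, p.2.1)) Stilde S := by
  have hε' : ε ≠ 0 := ne_of_gt hε
  subst hStilde hS
  have hinv : Set.InvOn g (fun p : ℝ × ℝ × ℝ => (p.1, p.2.1))
      {p : ℝ × ℝ × ℝ | (p.2.2 / ε) ^ 2 + (p.1 - 1 / 2) ^ 2 = 1 / 4 ∧ ε * p.2.1 = p.2.2 * p.1}
      {q : ℝ × ℝ | q.2 ^ 2 = q.1 ^ 3 - q.1 ^ 4} := by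
    constructor
    · rintro ⟨x, y, z⟩ ⟨h1, h2⟩
      simp only at h1 h2 ⊢
      rw [hg]
      by_cases hx : x = 0
      · subst hx
        have hz : z = 0 := by
          have h3 : (z / ε) ^ 2 = 0 := by nlinarith
          have h4 : z / ε = 0 := by
            exact pow_eq_zero_iff (by norm_num) |>.mp h3
          field_simp at h4
          simpa using h4
        have hy : y = 0 := by
          have : ε * y = 0 := by rw [h2, hz]; ring
          exact (mul_eq_zero.mp this).resolve_left hε'
        simp [hz, hy]
      · rw [if_neg hx]
        have hz : ε * y / x = z := by
          field_simp
          linarith [h2]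
        rw [hz]
    · rintro ⟨x, y⟩ hq
      simp only [Set.mem_setOf_eq] at hq
      rw [hg]
      by_cases hx : x = 0
      · have hy0 : y = 0 := by
          have : y ^ 2 = 0 := by rw [hq, hx]; ring
          exact pow_eq_zero_iff (by norm_num) |>.mp this
        simp [hx, hy0]
      · rw [if_neg hx]
  refine ⟨hinv.bijOn ?_ ?_, hinv⟩
  · rintro ⟨x, y, z⟩ ⟨h1, h2⟩
    simp only [Set.mem_setOf_eq] at h1 h2 ⊢
    have hz2 : z ^ 2 = ε ^ 2 * (x - x ^ 2) := by
      have h1' : z ^ 2 / ε ^ 2 + (x - 1 / 2) ^ 2 = 1 / 4 := by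
        rw [← h1]; ring
      field_simp at h1'
      nlinarith [h1', sq_nonneg ε]
    have hy : ε ^ 2 * y ^ 2 = z ^ 2 * x ^ 2 := by
      linear_combination (ε * y + z * x) * h2
    have hkey : ε ^ 2 * y ^ 2 = ε ^ 2 * (x ^ 3 - x ^ 4) := by
      rw [hy, hz2]; ring
    exact mul_left_cancel₀ (pow_ne_zero 2 hε') hkey
  · rintro ⟨x, y⟩ hq
    simp only [Set.mem_setOf_eq] at hq ⊢
    rw [hg]
    by_cases hx : x = 0
    · have hy0 : y = 0 := by
        have : y ^ 2 = 0 := by rw [hq, hx]; ring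
        exact pow_eq_zero_iff (by norm_num) |>.mp this
      simp only [hx, if_pos rfl]
      norm_num
    · rw [if_neg hx]
      constructor
      · field_simp
        linear_combination 16 * hq
      · field_simp
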